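/- If x = (x₁, x₂) ∈ ℝ^{d₁+d₂} is distributed according to the multivariate Student's t distribution MVT_{d₁+d₂}(ν, (μ₁, μ₂), Σ) with block scale matrix Σ = [[Σ₁₁, Σ₁₂], [Σ₂₁, Σ₂₂]] (Σ positive definite), then the conditional distribution of x₂ given x₁ is MVT_{d₂}(ν + d₁, μ₂', ((ν + c)/(ν + d₁)) Σ₂₂'), where μ₂' = μ₂ + Σ₂₁Σ₁₁⁻¹(x₁ − μ₁), c = (x₁ − μ₁)ᵀΣ₁₁⁻¹(x₁ − μ₁), and Σ₂₂' = Σ₂₂ − Σ₂₁Σ₁₁⁻¹Σ₁₂. -/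

import Mathlib

open MeasureTheory ProbabilityTheory Matrix Filter
open scoped Classical

noncomputable section

/-- Density of the multivariate Student's t distribution `MVT_d(ν, μ, S)`. -/
def mvtPdf (d : ℕ) (ν : ℝ) (μ : Fin d → ℝ) (S : Matrix (Fin d) (Fin d) ℝ) (x : Fin d → ℝ) : ℝ :=
  Real.Gamma ((ν + d) / 2) /
      ((ν * Real.pi) ^ ((d : ℝ) / 2) * Real.Gamma (ν / 2) * Real.sqrt S.det) *
    (1 + (1 / ν) * ((x - μ) ⬝ᵥ S⁻¹ *ᵥ (x - μ))) ^ (-(ν + d) / 2)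

/-- The multivariate Student's t distribution `MVT_d(ν, μ, S)` as a measure on `Fin d → ℝ`. -/
def MVT (d : ℕ) (ν : ℝ) (μ : Fin d → ℝ) (S : Matrix (Fin d) (Fin d) ℝ) :
    Measure (Fin d → ℝ) :=
  volume.withDensity fun x => ENNReal.ofReal (mvtPdf d ν μ S x)

set_option linter.unusedSectionVars false
set_option maxHeartbeats 1000000

section AuxMat
variable {m n : Type*} [Fintype m] [Fintype n] [DecidableEq m] [DecidableEq n]




lemma posDef_quad_nonneg {M : Matrix m m ℝ} (hM : M.PosDef) (v : m → ℝ) :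
    0 ≤ v ⬝ᵥ M *ᵥ v := by
  simpa using hM.posSemidef.dotProduct_mulVec_nonneg v

lemma posDef_submatrix_equiv {M : Matrix m m ℝ} (hM : M.PosDef) (e : n ≃ m) :
    (M.submatrix e e).PosDef := by
  refine PosDef.of_dotProduct_mulVec_pos ((isHermitian_submatrix_equiv e).2 hM.1) fun x hx => ?_
  have hx' : x ∘ e.symm ≠ 0 := by
    intro h
    apply hx
    funext i
    simpa using congrFun h (e i)
  have := hM.dotProduct_mulVec_pos hx'
  rw [submatrix_mulVec_equiv]
  simp only [star_trivial] at this ⊢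
  calc x ⬝ᵥ (M *ᵥ (x ∘ e.symm)) ∘ e
      = ∑ i, x i * (M *ᵥ (x ∘ e.symm)) (e i) := rfl
    _ = ∑ j, (x ∘ e.symm) j * (M *ᵥ (x ∘ e.symm)) j := by
        rw [← Equiv.sum_comp e (fun j => (x ∘ e.symm) j * (M *ᵥ (x ∘ e.symm)) j)]
        simp
    _ > 0 := this
  
lemma quad_submatrix_equiv (M : Matrix m m ℝ) (e : n ≃ m) (w : m → ℝ) :
    (w ∘ e) ⬝ᵥ (M.submatrix e e)⁻¹ *ᵥ (w ∘ e) = w ⬝ᵥ M⁻¹ *ᵥ w := by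
  rw [inv_submatrix_equiv, submatrix_mulVec_equiv]
  have : (w ∘ ⇑e) ∘ ⇑e.symm = w := by funext i; simp
  rw [this]
  calc (w ∘ e) ⬝ᵥ (M⁻¹ *ᵥ w) ∘ e
      = ∑ i, (w ∘ e) i * ((M⁻¹ *ᵥ w) ∘ e) i := rfl
    _ = ∑ j, w j * (M⁻¹ *ᵥ w) j := Equiv.sum_comp e (fun j => w j * (M⁻¹ *ᵥ w) j)
    _ = w ⬝ᵥ M⁻¹ *ᵥ w := rfl





lemma blocks_posDef₁₁ {A : Matrix m m ℝ} {B : Matrix m n ℝ} {D : Matrix n n ℝ}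
    (hP : (fromBlocks A B Bᵀ D).PosDef) : A.PosDef := by
  refine PosDef.of_dotProduct_mulVec_pos (isHermitian_fromBlocks_iff.mp hP.1).1 fun x hx => ?_
  have hx' : Sum.elim x (0 : n → ℝ) ≠ 0 := by
    intro h
    apply hx
    funext i
    exact congrFun h (Sum.inl i)
  have := hP.dotProduct_mulVec_pos hx'
  simpa [fromBlocks_mulVec, sumElim_dotProduct_sumElim] using this

lemma fromBlocks_transpose_eq {A : Matrix m m ℝ} (B : Matrix m n ℝ) (D : Matrix n n ℝ) :
    fromBlocks A B Bᵀ D = fromBlocks A B Bᴴ D := by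
  rw [conjTranspose_eq_transpose_of_trivial]

lemma schur_posDef {A : Matrix m m ℝ} {B : Matrix m n ℝ} {D : Matrix n n ℝ}
    (hP : (fromBlocks A B Bᵀ D).PosDef) : (D - Bᵀ * A⁻¹ * B).PosDef := by
  have hA := blocks_posDef₁₁ hP
  letI := hA.isUnit.invertible
  have hBt : Bᵀ = Bᴴ := (conjTranspose_eq_transpose_of_trivial B).symm
  have hherm : (D - Bᵀ * A⁻¹ * B).IsHermitian := by
    rw [hBt]
    exact (IsHermitian.fromBlocks₁₁ B D hA.1).mp (by rw [← fromBlocks_transpose_eq]; exact hP.1)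
  refine PosDef.of_dotProduct_mulVec_pos hherm fun y hy => ?_
  have hv : Sum.elim (-((A⁻¹ * B) *ᵥ y)) y ≠ 0 := by
    intro h
    apply hy
    funext j
    exact congrFun h (Sum.inr j)
  have h2 := hP.dotProduct_mulVec_pos hv
  rw [dotProduct_mulVec, fromBlocks_transpose_eq B D,
    schur_complement_eq₁₁ B D _ _ hA.1] at h2
  simp only [star_trivial, neg_add_cancel, zero_vecMul, zero_dotProduct, zero_add] at h2
  simpa [dotProduct_mulVec, ← hBt] using h2

lemma schur_det {A : Matrix m m ℝ} {B : Matrix m n ℝ} {D : Matrix n n ℝ}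
    (hP : (fromBlocks A B Bᵀ D).PosDef) :
    (fromBlocks A B Bᵀ D).det = A.det * (D - Bᵀ * A⁻¹ * B).det := by
  have hA := blocks_posDef₁₁ hP
  letI := hA.isUnit.invertible
  rw [det_fromBlocks₁₁, invOf_eq_nonsing_inv]

lemma schur_quad {A : Matrix m m ℝ} {B : Matrix m n ℝ} {D : Matrix n n ℝ}
    (hP : (fromBlocks A B Bᵀ D).PosDef) (v₁ : m → ℝ) (v₂ : n → ℝ) :
    Sum.elim v₁ v₂ ⬝ᵥ (fromBlocks A B Bᵀ D)⁻¹ *ᵥ Sum.elim v₁ v₂ =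
      v₁ ⬝ᵥ A⁻¹ *ᵥ v₁ +
      (v₂ - (Bᵀ * A⁻¹) *ᵥ v₁) ⬝ᵥ (D - Bᵀ * A⁻¹ * B)⁻¹ *ᵥ (v₂ - (Bᵀ * A⁻¹) *ᵥ v₁) := by
  have hA := blocks_posDef₁₁ hP
  have hSc := schur_posDef hP
  set Sc := D - Bᵀ * A⁻¹ * B with hScdef
  letI instA := hA.isUnit.invertible
  letI instSc : Invertible Sc := hSc.isUnit.invertible
  have hScdet : IsUnit Sc.det := hSc.det_pos.ne'.isUnit
  letI instSc2 : Invertible (D - Bᵀ * ⅟A * B) := by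
    rw [invOf_eq_nonsing_inv, ← hScdef]; exact instSc
  letI instP : Invertible (fromBlocks A B Bᵀ D) := fromBlocks₁₁Invertible A B Bᵀ D
  have hPinv : (fromBlocks A B Bᵀ D)⁻¹ =
      fromBlocks (A⁻¹ + A⁻¹ * B * Sc⁻¹ * (Bᵀ * A⁻¹)) (-(A⁻¹ * B * Sc⁻¹))
        (-(Sc⁻¹ * (Bᵀ * A⁻¹))) Sc⁻¹ := by
    rw [← invOf_eq_nonsing_inv, invOf_fromBlocks₁₁_eq]
    simp only [invOf_eq_nonsing_inv, hScdef, Matrix.mul_assoc]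
  have hFt : (-(A⁻¹ * B * Sc⁻¹))ᴴ = -(Sc⁻¹ * (Bᵀ * A⁻¹)) := by
    rw [conjTranspose_neg, conjTranspose_mul, conjTranspose_mul, hA.1.inv.eq, hSc.1.inv.eq,
      conjTranspose_eq_transpose_of_trivial]
  have hinvinv : Sc⁻¹⁻¹ = Sc := nonsing_inv_nonsing_inv _ hScdet
  have e1 : Sc⁻¹⁻¹ * -(Sc⁻¹ * (Bᵀ * A⁻¹)) = -(Bᵀ * A⁻¹) := by
    rw [hinvinv, Matrix.mul_neg, mul_inv_cancel_left_of_invertible]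
  have e2 : A⁻¹ + A⁻¹ * B * Sc⁻¹ * (Bᵀ * A⁻¹) -
      -(A⁻¹ * B * Sc⁻¹) * Sc⁻¹⁻¹ * -(Sc⁻¹ * (Bᵀ * A⁻¹)) = A⁻¹ := by
    rw [hinvinv, Matrix.neg_mul, Matrix.mul_neg, Matrix.neg_mul, neg_neg,
      Matrix.mul_assoc (A⁻¹ * B * Sc⁻¹) Sc, mul_inv_cancel_left_of_invertible,
      add_sub_cancel_right]
  have key := schur_complement_eq₂₂ (A⁻¹ + A⁻¹ * B * Sc⁻¹ * (Bᵀ * A⁻¹)) (-(A⁻¹ * B * Sc⁻¹))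
    v₁ v₂ (D := Sc⁻¹) hSc.1.inv
  rw [hFt] at key
  simp only [star_trivial] at key
  rw [← dotProduct_mulVec] at key
  rw [hPinv, key, e1, e2]
  simp only [neg_mulVec, ← dotProduct_mulVec, neg_add_eq_sub]
  exact add_comm _ _

end AuxMat

lemma key_scalar (ν c q dA dB : ℝ) (n₁ n₂ : ℕ) (hν : 0 < ν) (hc : 0 ≤ c) (hq : 0 ≤ q)
    (hdA : 0 < dA) (hdB : 0 < dB) :
    Real.Gamma ((ν + (n₁ + n₂ : ℕ)) / 2) /
        ((ν * Real.pi) ^ (((n₁ + n₂ : ℕ) : ℝ) / 2) * Real.Gamma (ν / 2) *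
          Real.sqrt (dA * dB)) *
      (1 + 1 / ν * (c + q)) ^ (-(ν + (n₁ + n₂ : ℕ)) / 2) =
    Real.Gamma ((ν + n₁) / 2) /
        ((ν * Real.pi) ^ ((n₁ : ℝ) / 2) * Real.Gamma (ν / 2) * Real.sqrt dA) *
      (1 + 1 / ν * c) ^ (-(ν + n₁) / 2) *
    (Real.Gamma ((ν + n₁ + n₂) / 2) /
        (((ν + n₁) * Real.pi) ^ ((n₂ : ℝ) / 2) * Real.Gamma ((ν + n₁) / 2) *
          Real.sqrt (((ν + c) / (ν + n₁)) ^ n₂ * dB)) *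
      (1 + 1 / (ν + n₁) * (((ν + c) / (ν + n₁))⁻¹ * q)) ^ (-(ν + n₁ + n₂) / 2)) := by
  have hπ := Real.pi_pos
  have hνd : 0 < ν + (n₁ : ℝ) := by positivity
  have hνc : 0 < ν + c := by linarith
  have hνπ : 0 < ν * Real.pi := by positivity
  have hu : 0 < 1 + q / (ν + c) := by positivity
  push_cast
  rw [show ν + ((n₁ : ℝ) + (n₂ : ℝ)) = ν + n₁ + n₂ from by ring]
  set N1 := (n₁ : ℝ) with hN1
  set N2 := (n₂ : ℝ) with hN2
  set t := -(ν + N1 + N2) / 2 with ht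
  set s := -(ν + N1) / 2 with hs
  rw [Real.sqrt_mul hdA.le]
  have e2 : Real.sqrt (((ν + c) / (ν + N1)) ^ n₂ * dB) =
      (ν + c) ^ (N2 / 2) / (ν + N1) ^ (N2 / 2) * Real.sqrt dB := by
    rw [Real.sqrt_mul (by positivity), Real.sqrt_eq_rpow,
      ← Real.rpow_natCast ((ν + c) / (ν + N1)) n₂, ← Real.rpow_mul (by positivity),
      show (n₂ : ℝ) * (1 / 2) = N2 / 2 from by rw [hN2]; ring,
      Real.div_rpow hνc.le hνd.le]
  have e3 : (ν * Real.pi) ^ ((N1 + N2) / 2) =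
      (ν * Real.pi) ^ (N1 / 2) * (ν * Real.pi) ^ (N2 / 2) := by
    rw [← Real.rpow_add hνπ]
    congr 1
    ring
  have e5 : ((ν + N1) * Real.pi) ^ (N2 / 2) =
      (ν + N1) ^ (N2 / 2) * Real.pi ^ (N2 / 2) := Real.mul_rpow hνd.le hπ.le
  have e4 : (ν * Real.pi) ^ (N2 / 2) = ν ^ (N2 / 2) * Real.pi ^ (N2 / 2) :=
    Real.mul_rpow hν.le hπ.le
  have e6 : (1 + 1 / ν * (c + q)) ^ t =
      (ν + c) ^ t / ν ^ t * (1 + q / (ν + c)) ^ t := by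
    rw [show 1 + 1 / ν * (c + q) = (ν + c) / ν * (1 + q / (ν + c)) from by
        field_simp; ring,
      Real.mul_rpow (by positivity) hu.le, Real.div_rpow hνc.le hν.le]
  have e7 : (1 + 1 / ν * c) ^ s = (ν + c) ^ s / ν ^ s := by
    rw [show 1 + 1 / ν * c = (ν + c) / ν from by field_simp,
      Real.div_rpow hνc.le hν.le]
  have e8 : 1 + 1 / (ν + N1) * (((ν + c) / (ν + N1))⁻¹ * q) = 1 + q / (ν + c) := by
    rw [inv_div]
    field_simp
  have e9 : (ν + c) ^ s = (ν + c) ^ t * (ν + c) ^ (N2 / 2) := by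
    rw [← Real.rpow_add hνc]
    congr 1
    rw [ht, hs]
    ring
  have e10 : ν ^ s = ν ^ t * ν ^ (N2 / 2) := by
    rw [← Real.rpow_add hν]
    congr 1
    rw [ht, hs]
    ring
  rw [e2, e3, e4, e5, e6, e7, e8, e9, e10]
  have hG1 : 0 < Real.Gamma (ν / 2) := Real.Gamma_pos_of_pos (by positivity)
  have hG2 : 0 < Real.Gamma ((ν + N1) / 2) := Real.Gamma_pos_of_pos (by positivity)
  have p1 : (0:ℝ) < (ν * Real.pi) ^ (N1 / 2) := Real.rpow_pos_of_pos hνπ _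
  have p2 : (0:ℝ) < ν ^ (N2 / 2) := Real.rpow_pos_of_pos hν _
  have p3 : (0:ℝ) < Real.pi ^ (N2 / 2) := Real.rpow_pos_of_pos hπ _
  have p4 : (0:ℝ) < (ν + N1) ^ (N2 / 2) := Real.rpow_pos_of_pos hνd _
  have p5 : (0:ℝ) < (ν + c) ^ (N2 / 2) := Real.rpow_pos_of_pos hνc _
  have p6 : (0:ℝ) < ν ^ t := Real.rpow_pos_of_pos hν _
  have p7 : (0:ℝ) < Real.sqrt dA := Real.sqrt_pos.2 hdA
  have p8 : (0:ℝ) < Real.sqrt dB := Real.sqrt_pos.2 hdB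
  field_simp


/-- The conditional distribution of the second block of a multivariate
Student's t distribution given the first block is the multivariate Student's t distribution
`MVT_{d₂}(ν + d₁, μ₂', ((ν + c)/(ν + d₁)) Σ₂₂')`, expressed as the factorization of the
joint density into the first-block marginal density times the conditional density (this is
the disintegration of the joint density along the first block). -/
theorem mvt_conditional_second_block (d₁ d₂ : ℕ) (ν : ℝ) (hν : 0 < ν)
    (μ : Fin (d₁ + d₂) → ℝ) (S : Matrix (Fin (d₁ + d₂)) (Fin (d₁ + d₂)) ℝ)
    (hS : S.PosDef) (x : Fin (d₁ + d₂) → ℝ)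
    (x₁ μ₁ : Fin d₁ → ℝ) (x₂ μ₂ : Fin d₂ → ℝ)
    (S₁₁ : Matrix (Fin d₁) (Fin d₁) ℝ) (S₁₂ : Matrix (Fin d₁) (Fin d₂) ℝ)
    (S₂₁ : Matrix (Fin d₂) (Fin d₁) ℝ) (S₂₂ : Matrix (Fin d₂) (Fin d₂) ℝ)
    (hx₁ : x₁ = fun i => x (Fin.castAdd d₂ i)) (hx₂ : x₂ = fun j => x (Fin.natAdd d₁ j))
    (hμ₁ : μ₁ = fun i => μ (Fin.castAdd d₂ i)) (hμ₂ : μ₂ = fun j => μ (Fin.natAdd d₁ j))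
    (hS₁₁ : S₁₁ = S.submatrix (Fin.castAdd d₂) (Fin.castAdd d₂))
    (hS₁₂ : S₁₂ = S.submatrix (Fin.castAdd d₂) (Fin.natAdd d₁))
    (hS₂₁ : S₂₁ = S.submatrix (Fin.natAdd d₁) (Fin.castAdd d₂))
    (hS₂₂ : S₂₂ = S.submatrix (Fin.natAdd d₁) (Fin.natAdd d₁))
    (c : ℝ) (hc : c = (x₁ - μ₁) ⬝ᵥ S₁₁⁻¹ *ᵥ (x₁ - μ₁))
    (μ₂' : Fin d₂ → ℝ) (hμ₂' : μ₂' = μ₂ + (S₂₁ * S₁₁⁻¹) *ᵥ (x₁ - μ₁))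
    (S₂₂' : Matrix (Fin d₂) (Fin d₂) ℝ) (hS₂₂' : S₂₂' = S₂₂ - S₂₁ * S₁₁⁻¹ * S₁₂) :
    mvtPdf (d₁ + d₂) ν μ S x =
      mvtPdf d₁ ν μ₁ S₁₁ x₁ *
        mvtPdf d₂ (ν + d₁) μ₂' (((ν + c) / (ν + d₁)) • S₂₂') x₂ := by
  have hπ := Real.pi_pos
  have hent : ∀ i j, S i j = S j i := fun i j => by simpa using (hS.1.apply j i)
  have hsym : S₂₁ = S₁₂ᵀ := by
    rw [hS₂₁, hS₁₂]
    ext i j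
    simp only [Matrix.transpose_apply, Matrix.submatrix_apply]
    exact hent _ _
  set e : Fin d₁ ⊕ Fin d₂ ≃ Fin (d₁ + d₂) := finSumFinEquiv with he
  have hPeq : S.submatrix e e = fromBlocks S₁₁ S₁₂ S₁₂ᵀ S₂₂ := by
    ext i j
    cases i with
    | inl i =>
      cases j with
      | inl j => simp [hS₁₁, he]
      | inr j => simp [hS₁₂, he]
    | inr i =>
      cases j with
      | inl j => simp [hS₁₂, he, hent (Fin.natAdd d₁ i) (Fin.castAdd d₂ j)]
      | inr j => simp [hS₂₂, he]
  have hP : (fromBlocks S₁₁ S₁₂ S₁₂ᵀ S₂₂).PosDef := hPeq ▸ posDef_submatrix_equiv hS e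
  have hA : S₁₁.PosDef := blocks_posDef₁₁ hP
  have hS22' : S₂₂' = S₂₂ - S₁₂ᵀ * S₁₁⁻¹ * S₁₂ := by rw [hS₂₂', hsym]
  have hSc : S₂₂'.PosDef := hS22' ▸ schur_posDef hP
  have hdet : S.det = S₁₁.det * S₂₂'.det := by
    rw [← det_submatrix_equiv_self e S, hPeq, schur_det hP, hS22']
  set v₁ := x₁ - μ₁ with hv₁
  set v₂ := x₂ - μ₂ with hv₂
  have hw : x₂ - μ₂' = v₂ - (S₁₂ᵀ * S₁₁⁻¹) *ᵥ v₁ := by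
    rw [hμ₂', hsym, sub_add_eq_sub_sub]
  have hcomp : (x - μ) ∘ e = Sum.elim v₁ v₂ := by
    funext i
    cases i with
    | inl i => simp [he, hv₁, hx₁, hμ₁]
    | inr j => simp [he, hv₂, hx₂, hμ₂]
  have hquad : (x - μ) ⬝ᵥ S⁻¹ *ᵥ (x - μ) =
      c + (x₂ - μ₂') ⬝ᵥ S₂₂'⁻¹ *ᵥ (x₂ - μ₂') := by
    rw [← quad_submatrix_equiv S e (x - μ), hPeq, hcomp, schur_quad hP v₁ v₂, ← hc,
      hw, hS22']
  have hc0 : 0 ≤ c := by rw [hc]; exact posDef_quad_nonneg hA.inv v₁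
  set q := (x₂ - μ₂') ⬝ᵥ S₂₂'⁻¹ *ᵥ (x₂ - μ₂') with hqdef
  have hq0 : 0 ≤ q := posDef_quad_nonneg hSc.inv _
  have hνd : 0 < ν + (d₁ : ℝ) := by positivity
  have hνc : 0 < ν + c := by linarith
  set k := (ν + c) / (ν + (d₁ : ℝ)) with hk
  have hk0 : 0 < k := div_pos hνc hνd
  letI : Invertible k := invertibleOfNonzero hk0.ne'
  have hdet2 : (k • S₂₂').det = k ^ d₂ * S₂₂'.det := by
    rw [det_smul]; simp
  have hq' : (x₂ - μ₂') ⬝ᵥ (k • S₂₂')⁻¹ *ᵥ (x₂ - μ₂') = k⁻¹ * q := by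
    rw [Matrix.inv_smul (A := S₂₂') (k := k) hSc.det_pos.ne'.isUnit, invOf_eq_inv, smul_mulVec,
      dotProduct_smul, hqdef, smul_eq_mul]
  simp only [mvtPdf]
  rw [hquad, hdet, hdet2, hq', ← hc]
  exact key_scalar ν c q S₁₁.det S₂₂'.det d₁ d₂ hν hc0 hq0 hA.det_pos hSc.det_pos


end
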